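/- Let Σ be a finite alphabet and let x and y be nonempty words over Σ. Then each of the languages L_{x<y} = {z ∈ Σ* : |z|_x < |z|_y}, L_{x≤y} = {z ∈ Σ* : |z|_x ≤ |z|_y}, L_{x=y} = {z ∈ Σ* : |z|_x = |z|_y}, and their complements L_{x≥y}, L_{x>y}, L_{x≠y} is a context-free language. -/

import Mathlib

/-- Number of (possibly overlapping) occurrences of `x` as a contiguous
subword (factor) of `z`. -/
def occCount {α : Type*} [DecidableEq α] (x z : List α) : ℕ :=
  ((List.range (z.length + 1)).filter (fun i => decide (x <+: z.drop i))).length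

/-- `wpow w n` is the word `w` concatenated with itself `n` times. -/
def wpow {α : Type*} (w : List α) (n : ℕ) : List α := (List.replicate n w).flatten

/-- `z` is `y`-bordered: `z ≠ y` and `y` is both a prefix and a suffix of `z`. -/
def IsBordered {α : Type*} (y z : List α) : Prop := z ≠ y ∧ y <+: z ∧ y <:+ z

/-- `x` is interlaced by `y`: `y` is a subword (factor) of every `x`-bordered word. -/
def InterlacedBy {α : Type*} (x y : List α) : Prop :=
  ∀ z : List α, IsBordered x z → y <:+: z

namespace CFCounter
section Machine
variable {T : Type} {S : Type} (step : S → T → S) (w : S → T → ℤ)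
def run (s : S) (z : List T) : S := z.foldl step s
def wt : S → List T → ℤ
  | _, [] => 0
  | s, a :: l => w s a + wt (step s a) l
@[simp] lemma run_nil (s : S) : run step s [] = s := rfl
@[simp] lemma run_cons (s : S) (a : T) (l : List T) :
    run step s (a :: l) = run step (step s a) l := rfl
@[simp] lemma run_append (s : S) (u v : List T) :
    run step s (u ++ v) = run step (run step s u) v := List.foldl_append ..
@[simp] lemma wt_nil (s : S) : wt step w s [] = 0 := rfl
@[simp] lemma wt_cons (s : S) (a : T) (l : List T) :
    wt step w s (a :: l) = w s a + wt step w (step s a) l := rfl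
lemma wt_append (s : S) (u v : List T) :
    wt step w s (u ++ v) = wt step w s u + wt step w (run step s u) v := by
  induction u generalizing s with
  | nil => simp
  | cons a u ih => simp [ih, add_assoc]

lemma wt_take_succ (s : S) (z : List T) {i : ℕ} (h : i < z.length) :
    wt step w s (z.take (i + 1)) =
      wt step w s (z.take i) + w (run step s (z.take i)) (z[i]'h) := by
  rw [List.take_succ, List.getElem?_eq_getElem h, Option.toList_some, wt_append]
  simp

lemma wt_take_bound (hw : ∀ s a, w s a = 1 ∨ w s a = 0 ∨ w s a = -1) (s : S) (z : List T)
    (i : ℕ) : wt step w s (z.take i) - 1 ≤ wt step w s (z.take (i + 1)) ∧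
      wt step w s (z.take (i + 1)) ≤ wt step w s (z.take i) + 1 := by
  rcases lt_or_ge i z.length with h | h
  · rw [wt_take_succ step w s z h]
    rcases hw (run step s (z.take i)) (z[i]'h) with h1 | h1 | h1 <;> rw [h1] <;> omega
  · rw [List.take_of_length_le h, List.take_of_length_le (by omega)]
    omega

end Machine


lemma first_hit (f : ℕ → ℤ) (hstep : ∀ i, f i - 1 ≤ f (i + 1) ∧ f (i + 1) ≤ f i + 1)
    (h0 : f 0 = 0) {n : ℕ} (hn : 1 ≤ f n) :
    ∃ i < n, f i = 0 ∧ f (i + 1) = 1 := by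
  classical
  have hex : ∃ j, 1 ≤ f j := ⟨n, hn⟩
  have hjn : Nat.find hex ≤ n := Nat.find_min' hex hn
  have hfj : 1 ≤ f (Nat.find hex) := Nat.find_spec hex
  have hj0 : Nat.find hex ≠ 0 := fun h => by rw [h, h0] at hfj; omega
  obtain ⟨i, hji⟩ : ∃ i, Nat.find hex = i + 1 := ⟨Nat.find hex - 1, by omega⟩
  have hfi : ¬ 1 ≤ f i := Nat.find_min hex (by omega)
  rw [hji] at hfj hjn
  have h1 := (hstep i).1
  have h2 := (hstep i).2
  exact ⟨i, by omega, by omega, by omega⟩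

inductive NT (S : Type) where
  | E : S → S → NT S
  | GE : S → NT S
  | LE : S → NT S
  | Zeq : S → NT S
  | Zgt : S → NT S
  | Zlt : S → NT S
  | Zne : S → NT S
deriving DecidableEq

section Grammar
variable {T : Type} [DecidableEq T] [Fintype T] {S : Type} [DecidableEq S] [Fintype S]
variable (step : S → T → S) (w : S → T → ℤ)

instance ruleDecEq {T N : Type*} [DecidableEq T] [DecidableEq N] :
    DecidableEq (ContextFreeRule T N) := fun r₁ r₂ =>
  decidable_of_iff (r₁.input = r₂.input ∧ r₁.output = r₂.output)
    (by cases r₁; cases r₂; simp)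

open Symbol in
def allRules : Finset (ContextFreeRule T (NT S)) :=
  (Finset.univ : Finset S).image (fun s => ⟨.E s s, []⟩) ∪
  ((Finset.univ : Finset (S × S × T)).filter (fun p => w p.1 p.2.2 = 0)).image
    (fun p => ⟨.E p.1 p.2.1,
      [terminal p.2.2, nonterminal (.E (step p.1 p.2.2) p.2.1)]⟩) ∪
  ((Finset.univ : Finset (S × S × S × T × T)).filter
      (fun p => w p.1 p.2.2.2.1 = 1 ∧ w p.2.2.1 p.2.2.2.2 = -1)).image
    (fun p => ⟨.E p.1 p.2.1,
      [terminal p.2.2.2.1, nonterminal (.E (step p.1 p.2.2.2.1) p.2.2.1),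
       terminal p.2.2.2.2, nonterminal (.E (step p.2.2.1 p.2.2.2.2) p.2.1)]⟩) ∪
  ((Finset.univ : Finset (S × S × S × T × T)).filter
      (fun p => w p.1 p.2.2.2.1 = -1 ∧ w p.2.2.1 p.2.2.2.2 = 1)).image
    (fun p => ⟨.E p.1 p.2.1,
      [terminal p.2.2.2.1, nonterminal (.E (step p.1 p.2.2.2.1) p.2.2.1),
       terminal p.2.2.2.2, nonterminal (.E (step p.2.2.1 p.2.2.2.2) p.2.1)]⟩) ∪
  (Finset.univ : Finset (S × S)).image
    (fun p => ⟨.GE p.1, [nonterminal (.E p.1 p.2)]⟩) ∪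
  ((Finset.univ : Finset (S × S × T)).filter (fun p => w p.2.1 p.2.2 = 1)).image
    (fun p => ⟨.GE p.1,
      [nonterminal (.E p.1 p.2.1), terminal p.2.2, nonterminal (.GE (step p.2.1 p.2.2))]⟩) ∪
  (Finset.univ : Finset (S × S)).image
    (fun p => ⟨.LE p.1, [nonterminal (.E p.1 p.2)]⟩) ∪
  ((Finset.univ : Finset (S × S × T)).filter (fun p => w p.2.1 p.2.2 = -1)).image
    (fun p => ⟨.LE p.1,
      [nonterminal (.E p.1 p.2.1), terminal p.2.2, nonterminal (.LE (step p.2.1 p.2.2))]⟩) ∪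
  (Finset.univ : Finset (S × S)).image
    (fun p => ⟨.Zeq p.1, [nonterminal (.E p.1 p.2)]⟩) ∪
  ((Finset.univ : Finset (S × S × T)).filter (fun p => w p.2.1 p.2.2 = 1)).image
    (fun p => ⟨.Zgt p.1,
      [nonterminal (.E p.1 p.2.1), terminal p.2.2, nonterminal (.GE (step p.2.1 p.2.2))]⟩) ∪
  ((Finset.univ : Finset (S × S × T)).filter (fun p => w p.2.1 p.2.2 = -1)).image
    (fun p => ⟨.Zlt p.1,
      [nonterminal (.E p.1 p.2.1), terminal p.2.2, nonterminal (.LE (step p.2.1 p.2.2))]⟩) ∪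
  ((Finset.univ : Finset (S × S × T)).filter (fun p => w p.2.1 p.2.2 = 1)).image
    (fun p => ⟨.Zne p.1,
      [nonterminal (.E p.1 p.2.1), terminal p.2.2, nonterminal (.GE (step p.2.1 p.2.2))]⟩) ∪
  ((Finset.univ : Finset (S × S × T)).filter (fun p => w p.2.1 p.2.2 = -1)).image
    (fun p => ⟨.Zne p.1,
      [nonterminal (.E p.1 p.2.1), terminal p.2.2, nonterminal (.LE (step p.2.1 p.2.2))]⟩)

@[reducible] def G (n : NT S) : ContextFreeGrammar T := ⟨NT S, n, allRules step w⟩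

def sem : NT S → Language T
  | .E s t => {z | wt step w s z = 0 ∧ run step s z = t}
  | .GE s => {z | 0 ≤ wt step w s z}
  | .LE s => {z | wt step w s z ≤ 0}
  | .Zeq s => {z | wt step w s z = 0}
  | .Zgt s => {z | 1 ≤ wt step w s z}
  | .Zlt s => {z | wt step w s z ≤ -1}
  | .Zne s => {z | wt step w s z ≠ 0}

def symSem : Symbol T (NT S) → Language T
  | .terminal a => {[a]}
  | .nonterminal n => sem step w n

def listSem (l : List (Symbol T (NT S))) : Language T := (l.map (symSem step w)).prod

@[simp] lemma listSem_nil : listSem step w [] = 1 := rfl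
@[simp] lemma listSem_cons (x : Symbol T (NT S)) (l) :
    listSem step w (x :: l) = symSem step w x * listSem step w l := by
  simp [listSem]
@[simp] lemma listSem_append (u v : List (Symbol T (NT S))) :
    listSem step w (u ++ v) = listSem step w u * listSem step w v := by
  simp [listSem]


lemma mem_sing_mul {a : T} {L : Language T} {z : List T} :
    z ∈ ({[a]} : Language T) * L ↔ ∃ u ∈ L, z = a :: u := by
  simp only [Language.mem_mul, Set.mem_singleton_iff]
  constructor
  · rintro ⟨u, rfl, v, hv, rfl⟩; exact ⟨v, hv, rfl⟩
  · rintro ⟨u, hu, rfl⟩; exact ⟨[a], rfl, u, hu, rfl⟩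

lemma mem_mul_sing_mul {L M : Language T} {b : T} {z : List T} :
    z ∈ L * (({[b]} : Language T) * M) ↔ ∃ u ∈ L, ∃ v ∈ M, z = u ++ b :: v := by
  simp only [Language.mem_mul, Set.mem_singleton_iff]
  constructor
  · rintro ⟨u, hu, _, ⟨v, rfl, v2, hv2, rfl⟩, rfl⟩; exact ⟨u, hu, v2, hv2, rfl⟩
  · rintro ⟨u, hu, v, hv, rfl⟩; exact ⟨u, hu, b :: v, ⟨[b], rfl, v, hv, rfl⟩, rfl⟩

lemma rules_sound : ∀ r ∈ allRules step w,
    listSem step w r.output ≤ sem step w r.input := by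
  intro r hr
  simp only [allRules, Finset.mem_union] at hr
  rcases hr with ((((((((((((h | h) | h) | h) | h) | h) | h) | h) | h) | h) | h) | h) | h) <;>
    obtain ⟨p, hp, rfl⟩ := Finset.mem_image.mp h <;>
    simp only [Finset.mem_filter, Finset.mem_univ, true_and] at hp <;>
    intro z (hz : z ∈ (_ : Language T)) <;>
    simp only [listSem_cons, listSem_nil, symSem, mul_one] at hz
  -- E s s → ε
  · have hz' : z = [] := by simpa using hz
    subst hz'; simp [sem]
  -- E s t → a E
  · rw [mem_sing_mul] at hz
    obtain ⟨u, hu, rfl⟩ := hz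
    obtain ⟨hu1, hu2⟩ := hu
    simp [sem, hp, hu1, hu2]
  -- E s t → a E b E  (+1 -1)
  · rw [mem_sing_mul] at hz
    obtain ⟨u0, hu0, rfl⟩ := hz
    rw [mem_mul_sing_mul] at hu0
    obtain ⟨u, ⟨hu1, hu2⟩, v, ⟨hv1, hv2⟩, rfl⟩ := hu0
    refine ⟨?_, ?_⟩
    · simp [sem, wt_append, hp.1, hu1, hu2, hp.2, hv1]
    · simp [sem, hu2, hv2]
  -- E s t → a E b E  (-1 +1)
  · rw [mem_sing_mul] at hz
    obtain ⟨u0, hu0, rfl⟩ := hz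
    rw [mem_mul_sing_mul] at hu0
    obtain ⟨u, ⟨hu1, hu2⟩, v, ⟨hv1, hv2⟩, rfl⟩ := hu0
    refine ⟨?_, ?_⟩
    · simp [sem, wt_append, hp.1, hu1, hu2, hp.2, hv1]
    · simp [sem, hu2, hv2]
  -- GE s → E s t
  · obtain ⟨hu1, hu2⟩ := hz
    simp [sem, hu1]
  -- GE s → E a GE
  · rw [mem_mul_sing_mul] at hz
    obtain ⟨u, ⟨hu1, hu2⟩, v, hv, rfl⟩ := hz
    simp only [sem, Set.mem_setOf_eq] at hv ⊢
    change _ ∈ (_ : Set (List T)) at hv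
    rw [Set.mem_setOf_eq] at hv
    simp [wt_append, hu1, hu2, hp]
    omega
  -- LE s → E s t
  · obtain ⟨hu1, hu2⟩ := hz
    simp [sem, hu1]
  -- LE s → E a LE
  · rw [mem_mul_sing_mul] at hz
    obtain ⟨u, ⟨hu1, hu2⟩, v, hv, rfl⟩ := hz
    simp only [sem, Set.mem_setOf_eq] at hv ⊢
    change _ ∈ (_ : Set (List T)) at hv
    rw [Set.mem_setOf_eq] at hv
    simp [wt_append, hu1, hu2, hp]
    omega
  -- Zeq s → E s t
  · obtain ⟨hu1, hu2⟩ := hz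
    simp [sem, hu1]
  -- Zgt s → E a GE
  · rw [mem_mul_sing_mul] at hz
    obtain ⟨u, ⟨hu1, hu2⟩, v, hv, rfl⟩ := hz
    simp only [sem, Set.mem_setOf_eq] at hv ⊢
    change _ ∈ (_ : Set (List T)) at hv
    rw [Set.mem_setOf_eq] at hv
    simp [wt_append, hu1, hu2, hp]
    omega
  -- Zlt s → E a LE
  · rw [mem_mul_sing_mul] at hz
    obtain ⟨u, ⟨hu1, hu2⟩, v, hv, rfl⟩ := hz
    simp only [sem, Set.mem_setOf_eq] at hv ⊢
    change _ ∈ (_ : Set (List T)) at hv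
    rw [Set.mem_setOf_eq] at hv
    simp [wt_append, hu1, hu2, hp]
    omega
  -- Zne s → E a GE
  · rw [mem_mul_sing_mul] at hz
    obtain ⟨u, ⟨hu1, hu2⟩, v, hv, rfl⟩ := hz
    simp only [sem, Set.mem_setOf_eq] at hv ⊢
    change _ ∈ (_ : Set (List T)) at hv
    rw [Set.mem_setOf_eq] at hv
    simp [wt_append, hu1, hu2, hp]
    omega
  -- Zne s → E a LE
  · rw [mem_mul_sing_mul] at hz
    obtain ⟨u, ⟨hu1, hu2⟩, v, hv, rfl⟩ := hz
    simp only [sem, Set.mem_setOf_eq] at hv ⊢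
    change _ ∈ (_ : Set (List T)) at hv
    rw [Set.mem_setOf_eq] at hv
    simp [wt_append, hu1, hu2, hp]
    omega

lemma listSem_single_nt (n : NT S) :
    listSem step w [Symbol.nonterminal n] = sem step w n := by
  show symSem step w (Symbol.nonterminal n) * 1 = sem step w n
  rw [mul_one]; rfl

lemma derives_sound {n₀ : NT S} {u v : List (Symbol T (NT S))}
    (h : (G step w n₀).Derives u v) : listSem step w v ≤ listSem step w u := by
  induction h with
  | refl => exact le_rfl
  | tail _ hp ih =>
    refine le_trans ?_ ih
    obtain ⟨r, hr, hrw⟩ := hp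
    obtain ⟨pfx, sfx, rfl, rfl⟩ := hrw.exists_parts
    rw [listSem_append step w, listSem_append step w, listSem_append step w,
      listSem_append step w]
    have hle : listSem step w r.output ≤ listSem step w [Symbol.nonterminal r.input] := by
      rw [listSem_single_nt step w]; exact rules_sound step w r hr
    exact mul_le_mul' (mul_le_mul' le_rfl hle) le_rfl

lemma mem_listSem_self (z : List T) :
    z ∈ listSem step w (z.map Symbol.terminal) := by
  induction z with
  | nil => exact Set.mem_singleton _
  | cons a l ih =>
    simp only [List.map_cons, listSem_cons, symSem]
    exact mem_sing_mul.mpr ⟨l, ih, rfl⟩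

lemma lang_le (n₀ : NT S) : (G step w n₀).language ≤ sem step w n₀ := by
  intro z (hz : z ∈ (G step w n₀).language)
  rw [ContextFreeGrammar.mem_language_iff] at hz
  have h := derives_sound step w hz (mem_listSem_self step w z)
  rwa [listSem_single_nt] at h

section MemRules

lemma memE1 (s : S) :
    (⟨.E s s, []⟩ : ContextFreeRule T (NT S)) ∈ allRules step w := by
  unfold allRules
  iterate 12 refine Finset.mem_union_left _ ?_
  exact Finset.mem_image.mpr ⟨s, Finset.mem_univ _, rfl⟩

lemma memE0 {s : S} {a : T} (t : S) (h : w s a = 0) :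
    (⟨.E s t, [Symbol.terminal a, Symbol.nonterminal (.E (step s a) t)]⟩ :
      ContextFreeRule T (NT S)) ∈ allRules step w := by
  unfold allRules
  iterate 11 refine Finset.mem_union_left _ ?_
  refine Finset.mem_union_right _ ?_
  exact Finset.mem_image.mpr ⟨(s, t, a),
    Finset.mem_filter.mpr ⟨Finset.mem_univ _, h⟩, rfl⟩

lemma memEP {s r : S} {a b : T} (t : S) (ha : w s a = 1) (hb : w r b = -1) :
    (⟨.E s t, [Symbol.terminal a, Symbol.nonterminal (.E (step s a) r),
        Symbol.terminal b, Symbol.nonterminal (.E (step r b) t)]⟩ :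
      ContextFreeRule T (NT S)) ∈ allRules step w := by
  unfold allRules
  iterate 10 refine Finset.mem_union_left _ ?_
  refine Finset.mem_union_right _ ?_
  exact Finset.mem_image.mpr ⟨(s, t, r, a, b),
    Finset.mem_filter.mpr ⟨Finset.mem_univ _, ⟨ha, hb⟩⟩, rfl⟩

lemma memEM {s r : S} {a b : T} (t : S) (ha : w s a = -1) (hb : w r b = 1) :
    (⟨.E s t, [Symbol.terminal a, Symbol.nonterminal (.E (step s a) r),
        Symbol.terminal b, Symbol.nonterminal (.E (step r b) t)]⟩ :
      ContextFreeRule T (NT S)) ∈ allRules step w := by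
  unfold allRules
  iterate 9 refine Finset.mem_union_left _ ?_
  refine Finset.mem_union_right _ ?_
  exact Finset.mem_image.mpr ⟨(s, t, r, a, b),
    Finset.mem_filter.mpr ⟨Finset.mem_univ _, ⟨ha, hb⟩⟩, rfl⟩

lemma memGE1 (s t : S) :
    (⟨.GE s, [Symbol.nonterminal (.E s t)]⟩ :
      ContextFreeRule T (NT S)) ∈ allRules step w := by
  unfold allRules
  iterate 8 refine Finset.mem_union_left _ ?_
  refine Finset.mem_union_right _ ?_
  exact Finset.mem_image.mpr ⟨(s, t), Finset.mem_univ _, rfl⟩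

lemma memGE2 (s : S) {t : S} {a : T} (h : w t a = 1) :
    (⟨.GE s, [Symbol.nonterminal (.E s t), Symbol.terminal a,
        Symbol.nonterminal (.GE (step t a))]⟩ :
      ContextFreeRule T (NT S)) ∈ allRules step w := by
  unfold allRules
  iterate 7 refine Finset.mem_union_left _ ?_
  refine Finset.mem_union_right _ ?_
  exact Finset.mem_image.mpr ⟨(s, t, a),
    Finset.mem_filter.mpr ⟨Finset.mem_univ _, h⟩, rfl⟩

lemma memLE1 (s t : S) :
    (⟨.LE s, [Symbol.nonterminal (.E s t)]⟩ :
      ContextFreeRule T (NT S)) ∈ allRules step w := by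
  unfold allRules
  iterate 6 refine Finset.mem_union_left _ ?_
  refine Finset.mem_union_right _ ?_
  exact Finset.mem_image.mpr ⟨(s, t), Finset.mem_univ _, rfl⟩

lemma memLE2 (s : S) {t : S} {a : T} (h : w t a = -1) :
    (⟨.LE s, [Symbol.nonterminal (.E s t), Symbol.terminal a,
        Symbol.nonterminal (.LE (step t a))]⟩ :
      ContextFreeRule T (NT S)) ∈ allRules step w := by
  unfold allRules
  iterate 5 refine Finset.mem_union_left _ ?_
  refine Finset.mem_union_right _ ?_
  exact Finset.mem_image.mpr ⟨(s, t, a),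
    Finset.mem_filter.mpr ⟨Finset.mem_univ _, h⟩, rfl⟩

lemma memZeq (s t : S) :
    (⟨.Zeq s, [Symbol.nonterminal (.E s t)]⟩ :
      ContextFreeRule T (NT S)) ∈ allRules step w := by
  unfold allRules
  iterate 4 refine Finset.mem_union_left _ ?_
  refine Finset.mem_union_right _ ?_
  exact Finset.mem_image.mpr ⟨(s, t), Finset.mem_univ _, rfl⟩

lemma memZgt (s : S) {t : S} {a : T} (h : w t a = 1) :
    (⟨.Zgt s, [Symbol.nonterminal (.E s t), Symbol.terminal a,
        Symbol.nonterminal (.GE (step t a))]⟩ :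
      ContextFreeRule T (NT S)) ∈ allRules step w := by
  unfold allRules
  iterate 3 refine Finset.mem_union_left _ ?_
  refine Finset.mem_union_right _ ?_
  exact Finset.mem_image.mpr ⟨(s, t, a),
    Finset.mem_filter.mpr ⟨Finset.mem_univ _, h⟩, rfl⟩

lemma memZlt (s : S) {t : S} {a : T} (h : w t a = -1) :
    (⟨.Zlt s, [Symbol.nonterminal (.E s t), Symbol.terminal a,
        Symbol.nonterminal (.LE (step t a))]⟩ :
      ContextFreeRule T (NT S)) ∈ allRules step w := by
  unfold allRules
  iterate 2 refine Finset.mem_union_left _ ?_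
  refine Finset.mem_union_right _ ?_
  exact Finset.mem_image.mpr ⟨(s, t, a),
    Finset.mem_filter.mpr ⟨Finset.mem_univ _, h⟩, rfl⟩

lemma memZne1 (s : S) {t : S} {a : T} (h : w t a = 1) :
    (⟨.Zne s, [Symbol.nonterminal (.E s t), Symbol.terminal a,
        Symbol.nonterminal (.GE (step t a))]⟩ :
      ContextFreeRule T (NT S)) ∈ allRules step w := by
  unfold allRules
  iterate 1 refine Finset.mem_union_left _ ?_
  refine Finset.mem_union_right _ ?_
  exact Finset.mem_image.mpr ⟨(s, t, a),
    Finset.mem_filter.mpr ⟨Finset.mem_univ _, h⟩, rfl⟩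

lemma memZne2 (s : S) {t : S} {a : T} (h : w t a = -1) :
    (⟨.Zne s, [Symbol.nonterminal (.E s t), Symbol.terminal a,
        Symbol.nonterminal (.LE (step t a))]⟩ :
      ContextFreeRule T (NT S)) ∈ allRules step w := by
  unfold allRules
  refine Finset.mem_union_right _ ?_
  exact Finset.mem_image.mpr ⟨(s, t, a),
    Finset.mem_filter.mpr ⟨Finset.mem_univ _, h⟩, rfl⟩

end MemRules

lemma produces_rule (n₀ : NT S) {r : ContextFreeRule T (NT S)}
    (hr : r ∈ allRules step w) :
    (G step w n₀).Produces [Symbol.nonterminal r.input] r.output :=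
  ⟨r, hr, ContextFreeRule.Rewrites.input_output⟩

lemma derives_concat {g : ContextFreeGrammar T} {u₁ u₂ v₁ v₂ : List (Symbol T g.NT)}
    (h1 : g.Derives u₁ v₁) (h2 : g.Derives u₂ v₂) :
    g.Derives (u₁ ++ u₂) (v₁ ++ v₂) :=
  (h1.append_right u₂).trans (h2.append_left v₁)

variable (hw : ∀ s a, w s a = 1 ∨ w s a = 0 ∨ w s a = -1)

include hw in
lemma derE (n₀ : NT S) : ∀ (m : ℕ) (z : List T) (s : S), z.length ≤ m →
    wt step w s z = 0 →
    (G step w n₀).Derives [Symbol.nonterminal (.E s (run step s z))]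
      (z.map Symbol.terminal) := by
  intro m
  induction m with
  | zero =>
    intro z s hl h0
    obtain rfl : z = [] := List.length_eq_zero_iff.mp (Nat.le_zero.mp hl)
    exact (produces_rule step w n₀ (memE1 step w s)).single
  | succ m ih =>
    intro z s hl h0
    match z with
    | [] => exact (produces_rule step w n₀ (memE1 step w s)).single
    | a :: z' =>
      have hl' : z'.length ≤ m := by simpa using hl
      rcases hw s a with h1 | h1 | h1
      · -- w s a = 1
        have h0' : wt step w (step s a) z' = -1 := by
          rw [wt_cons, h1] at h0; omega
        obtain ⟨i, hb, hfi, hfi1⟩ :=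
          first_hit (fun i => - wt step w (step s a) (z'.take i))
            (fun i => by have := wt_take_bound step w hw (step s a) z' i; omega)
            (by simp) (n := z'.length)
            (by rw [List.take_length]; omega)
        simp only [neg_eq_zero] at hfi
        have hfi1' : wt step w (step s a) (z'.take (i + 1)) = -1 := by omega
        have hsplit : z'.take i ++ z'[i]'hb :: z'.drop (i + 1) = z' := by
          rw [← List.drop_eq_getElem_cons hb, List.take_append_drop]
        have hts := wt_take_succ step w (step s a) z' hb
        rw [hfi1', hfi] at hts
        have hwb : w (run step (step s a) (z'.take i)) (z'[i]'hb) = -1 := by omega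
        have hvwt : wt step w
            (step (run step (step s a) (z'.take i)) (z'[i]'hb)) (z'.drop (i + 1)) = 0 := by
          have h2 := h0'
          rw [← hsplit, wt_append, wt_cons, hfi, hwb] at h2
          omega
        have hT : run step s (a :: z') =
            run step (step (run step (step s a) (z'.take i)) (z'[i]'hb)) (z'.drop (i + 1)) := by
          conv_lhs => rw [run_cons, ← hsplit]
          rw [run_append, run_cons]
        have hrule := produces_rule step w n₀
          (memEP step w (run step s (a :: z')) h1 hwb)
        have d1 : (G step w n₀).Derives
            [Symbol.nonterminal (.E (step s a) (run step (step s a) (z'.take i)))]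
            ((z'.take i).map Symbol.terminal) :=
          ih (z'.take i) (step s a)
            (by have := List.length_take_le i z'; omega) hfi
        have d2 : (G step w n₀).Derives
            [Symbol.nonterminal (.E (step (run step (step s a) (z'.take i)) (z'[i]'hb))
              (run step s (a :: z')))]
            ((z'.drop (i + 1)).map Symbol.terminal) := by
          have := ih (z'.drop (i + 1))
            (step (run step (step s a) (z'.take i)) (z'[i]'hb))
            (by have := List.length_drop (i := i+1) (l := z'); omega) hvwt
          rwa [← hT] at this
        refine hrule.trans_derives ?_
        have dall := derives_concat (derives_concat (derives_concat
          (ContextFreeGrammar.Derives.refl (g := G step w n₀) [Symbol.terminal a]) d1)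
          (ContextFreeGrammar.Derives.refl (g := G step w n₀) [Symbol.terminal (z'[i]'hb)])) d2
        have eqR : [Symbol.terminal a] ++ ((z'.take i).map Symbol.terminal) ++
            [Symbol.terminal (z'[i]'hb)] ++ ((z'.drop (i + 1)).map Symbol.terminal) =
            (a :: z').map (Symbol.terminal : T → Symbol T (NT S)) := by
          conv_rhs => rw [← hsplit]
          simp only [List.map_cons, List.map_append, List.cons_append,
            List.singleton_append, List.append_assoc, List.nil_append]
        rw [eqR] at dall
        exact dall
      · -- w s a = 0
        have h0' : wt step w (step s a) z' = 0 := by rw [wt_cons, h1] at h0; omega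
        have hrule := produces_rule step w n₀
          (memE0 step w (run step (step s a) z') h1)
        refine hrule.trans_derives ?_
        have := (ih z' (step s a) hl' h0').append_left [Symbol.terminal a]
        simpa using this
      · -- w s a = -1
        have h0' : wt step w (step s a) z' = 1 := by
          rw [wt_cons, h1] at h0; omega
        obtain ⟨i, hb, hfi, hfi1⟩ :=
          first_hit (fun i => wt step w (step s a) (z'.take i))
            (fun i => by have := wt_take_bound step w hw (step s a) z' i; omega)
            (by simp) (n := z'.length)
            (by rw [List.take_length]; omega)
        have hsplit : z'.take i ++ z'[i]'hb :: z'.drop (i + 1) = z' := by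
          rw [← List.drop_eq_getElem_cons hb, List.take_append_drop]
        have hts := wt_take_succ step w (step s a) z' hb
        rw [hfi1, hfi] at hts
        have hwb : w (run step (step s a) (z'.take i)) (z'[i]'hb) = 1 := by omega
        have hvwt : wt step w
            (step (run step (step s a) (z'.take i)) (z'[i]'hb)) (z'.drop (i + 1)) = 0 := by
          have h2 := h0'
          rw [← hsplit, wt_append, wt_cons, hfi, hwb] at h2
          omega
        have hT : run step s (a :: z') =
            run step (step (run step (step s a) (z'.take i)) (z'[i]'hb)) (z'.drop (i + 1)) := by
          conv_lhs => rw [run_cons, ← hsplit]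
          rw [run_append, run_cons]
        have hrule := produces_rule step w n₀
          (memEM step w (run step s (a :: z')) h1 hwb)
        have d1 : (G step w n₀).Derives
            [Symbol.nonterminal (.E (step s a) (run step (step s a) (z'.take i)))]
            ((z'.take i).map Symbol.terminal) :=
          ih (z'.take i) (step s a)
            (by have := List.length_take_le i z'; omega) hfi
        have d2 : (G step w n₀).Derives
            [Symbol.nonterminal (.E (step (run step (step s a) (z'.take i)) (z'[i]'hb))
              (run step s (a :: z')))]
            ((z'.drop (i + 1)).map Symbol.terminal) := by
          have := ih (z'.drop (i + 1))
            (step (run step (step s a) (z'.take i)) (z'[i]'hb))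
            (by have := List.length_drop (i := i+1) (l := z'); omega) hvwt
          rwa [← hT] at this
        refine hrule.trans_derives ?_
        have dall := derives_concat (derives_concat (derives_concat
          (ContextFreeGrammar.Derives.refl (g := G step w n₀) [Symbol.terminal a]) d1)
          (ContextFreeGrammar.Derives.refl (g := G step w n₀) [Symbol.terminal (z'[i]'hb)])) d2
        have eqR : [Symbol.terminal a] ++ ((z'.take i).map Symbol.terminal) ++
            [Symbol.terminal (z'[i]'hb)] ++ ((z'.drop (i + 1)).map Symbol.terminal) =
            (a :: z').map (Symbol.terminal : T → Symbol T (NT S)) := by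
          conv_rhs => rw [← hsplit]
          simp only [List.map_cons, List.map_append, List.cons_append,
            List.singleton_append, List.append_assoc, List.nil_append]
        rw [eqR] at dall
        exact dall

include hw in
lemma derE' (n₀ : NT S) (z : List T) (s : S) (h : wt step w s z = 0) :
    (G step w n₀).Derives [Symbol.nonterminal (.E s (run step s z))]
      (z.map Symbol.terminal) :=
  derE step w hw n₀ z.length z s le_rfl h

include hw in
lemma derGE (n₀ : NT S) : ∀ (m : ℕ) (z : List T) (s : S), z.length ≤ m →
    0 ≤ wt step w s z →
    (G step w n₀).Derives [Symbol.nonterminal (.GE s)] (z.map Symbol.terminal) := by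
  intro m
  induction m with
  | zero =>
    intro z s hl h0
    obtain rfl : z = [] := List.length_eq_zero_iff.mp (Nat.le_zero.mp hl)
    exact (produces_rule step w n₀ (memGE1 step w s s)).trans_derives
      (derE' step w hw n₀ [] s rfl)
  | succ m ih =>
    intro z s hl h0
    rcases eq_or_lt_of_le h0 with heq | hlt
    · exact (produces_rule step w n₀ (memGE1 step w s (run step s z))).trans_derives
        (derE' step w hw n₀ z s heq.symm)
    · obtain ⟨i, hb, hfi, hfi1⟩ :=
        first_hit (fun i => wt step w s (z.take i))
          (fun i => by have := wt_take_bound step w hw s z i; omega)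
          (by simp) (n := z.length)
          (by rw [List.take_length]; omega)
      have hsplit : z.take i ++ z[i]'hb :: z.drop (i + 1) = z := by
        rw [← List.drop_eq_getElem_cons hb, List.take_append_drop]
      have hts := wt_take_succ step w s z hb
      rw [hfi1, hfi] at hts
      have hwb : w (run step s (z.take i)) (z[i]'hb) = 1 := by omega
      have hvwt : 0 ≤ wt step w
          (step (run step s (z.take i)) (z[i]'hb)) (z.drop (i + 1)) := by
        have h2 : 0 < wt step w s z := hlt
        rw [← hsplit, wt_append, wt_cons, hfi, hwb] at h2
        omega
      have d1 := derE' step w hw n₀ (z.take i) s hfi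
      have d2 := ih (z.drop (i + 1))
        (step (run step s (z.take i)) (z[i]'hb))
        (by have := List.length_drop (i := i+1) (l := z); omega) hvwt
      refine (produces_rule step w n₀ (memGE2 step w s hwb)).trans_derives ?_
      have dall := derives_concat (derives_concat d1
        (ContextFreeGrammar.Derives.refl (g := G step w n₀) [Symbol.terminal (z[i]'hb)])) d2
      have eqR : ((z.take i).map Symbol.terminal) ++ [Symbol.terminal (z[i]'hb)] ++
          ((z.drop (i + 1)).map Symbol.terminal) =
          z.map (Symbol.terminal : T → Symbol T (NT S)) := by
        conv_rhs => rw [← hsplit]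
        simp only [List.map_cons, List.map_append, List.cons_append,
          List.singleton_append, List.append_assoc, List.nil_append]
      rw [eqR] at dall
      exact dall

include hw in
lemma derLE (n₀ : NT S) : ∀ (m : ℕ) (z : List T) (s : S), z.length ≤ m →
    wt step w s z ≤ 0 →
    (G step w n₀).Derives [Symbol.nonterminal (.LE s)] (z.map Symbol.terminal) := by
  intro m
  induction m with
  | zero =>
    intro z s hl h0
    obtain rfl : z = [] := List.length_eq_zero_iff.mp (Nat.le_zero.mp hl)
    exact (produces_rule step w n₀ (memLE1 step w s s)).trans_derives
      (derE' step w hw n₀ [] s rfl)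
  | succ m ih =>
    intro z s hl h0
    rcases eq_or_lt_of_le h0 with heq | hlt
    · exact (produces_rule step w n₀ (memLE1 step w s (run step s z))).trans_derives
        (derE' step w hw n₀ z s heq)
    · obtain ⟨i, hb, hfi, hfi1⟩ :=
        first_hit (fun i => - wt step w s (z.take i))
          (fun i => by have := wt_take_bound step w hw s z i; omega)
          (by simp) (n := z.length)
          (by rw [List.take_length]; omega)
      simp only [neg_eq_zero] at hfi
      have hfi1' : wt step w s (z.take (i + 1)) = -1 := by omega
      have hsplit : z.take i ++ z[i]'hb :: z.drop (i + 1) = z := by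
        rw [← List.drop_eq_getElem_cons hb, List.take_append_drop]
      have hts := wt_take_succ step w s z hb
      rw [hfi1', hfi] at hts
      have hwb : w (run step s (z.take i)) (z[i]'hb) = -1 := by omega
      have hvwt : wt step w
          (step (run step s (z.take i)) (z[i]'hb)) (z.drop (i + 1)) ≤ 0 := by
        have h2 : wt step w s z < 0 := hlt
        rw [← hsplit, wt_append, wt_cons, hfi, hwb] at h2
        omega
      have d1 := derE' step w hw n₀ (z.take i) s hfi
      have d2 := ih (z.drop (i + 1))
        (step (run step s (z.take i)) (z[i]'hb))
        (by have := List.length_drop (i := i+1) (l := z); omega) hvwt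
      refine (produces_rule step w n₀ (memLE2 step w s hwb)).trans_derives ?_
      have dall := derives_concat (derives_concat d1
        (ContextFreeGrammar.Derives.refl (g := G step w n₀) [Symbol.terminal (z[i]'hb)])) d2
      have eqR : ((z.take i).map Symbol.terminal) ++ [Symbol.terminal (z[i]'hb)] ++
          ((z.drop (i + 1)).map Symbol.terminal) =
          z.map (Symbol.terminal : T → Symbol T (NT S)) := by
        conv_rhs => rw [← hsplit]
        simp only [List.map_cons, List.map_append, List.cons_append,
          List.singleton_append, List.append_assoc, List.nil_append]
      rw [eqR] at dall
      exact dall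

include hw in
lemma derZeq (z : List T) (s : S) (h : wt step w s z = 0) :
    (G step w (.Zeq s)).Derives [Symbol.nonterminal (.Zeq s)] (z.map Symbol.terminal) :=
  (produces_rule step w _ (memZeq step w s (run step s z))).trans_derives
    (derE' step w hw _ z s h)

include hw in
lemma derZgt (z : List T) (s : S) (h : 1 ≤ wt step w s z) :
    (G step w (.Zgt s)).Derives [Symbol.nonterminal (.Zgt s)] (z.map Symbol.terminal) := by
  obtain ⟨i, hb, hfi, hfi1⟩ :=
    first_hit (fun i => wt step w s (z.take i))
      (fun i => by have := wt_take_bound step w hw s z i; omega)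
      (by simp) (n := z.length)
      (by rw [List.take_length]; omega)
  have hsplit : z.take i ++ z[i]'hb :: z.drop (i + 1) = z := by
    rw [← List.drop_eq_getElem_cons hb, List.take_append_drop]
  have hts := wt_take_succ step w s z hb
  rw [hfi1, hfi] at hts
  have hwb : w (run step s (z.take i)) (z[i]'hb) = 1 := by omega
  have hvwt : 0 ≤ wt step w
      (step (run step s (z.take i)) (z[i]'hb)) (z.drop (i + 1)) := by
    have h2 := h
    rw [← hsplit, wt_append, wt_cons, hfi, hwb] at h2
    omega
  have d1 := derE' step w hw (NT.Zgt s) (z.take i) s hfi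
  have d2 := derGE step w hw (NT.Zgt s) (z.drop (i+1)).length (z.drop (i + 1))
    (step (run step s (z.take i)) (z[i]'hb)) le_rfl hvwt
  refine (produces_rule step w _ (memZgt step w s hwb)).trans_derives ?_
  have dall := derives_concat (derives_concat d1
    (ContextFreeGrammar.Derives.refl (g := G step w (NT.Zgt s)) [Symbol.terminal (z[i]'hb)])) d2
  have eqR : ((z.take i).map Symbol.terminal) ++ [Symbol.terminal (z[i]'hb)] ++
      ((z.drop (i + 1)).map Symbol.terminal) =
      z.map (Symbol.terminal : T → Symbol T (NT S)) := by
    conv_rhs => rw [← hsplit]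
    simp only [List.map_cons, List.map_append, List.cons_append,
      List.singleton_append, List.append_assoc, List.nil_append]
  rw [eqR] at dall
  exact dall

include hw in
lemma derZlt (z : List T) (s : S) (h : wt step w s z ≤ -1) :
    (G step w (.Zlt s)).Derives [Symbol.nonterminal (.Zlt s)] (z.map Symbol.terminal) := by
  obtain ⟨i, hb, hfi, hfi1⟩ :=
    first_hit (fun i => - wt step w s (z.take i))
      (fun i => by have := wt_take_bound step w hw s z i; omega)
      (by simp) (n := z.length)
      (by rw [List.take_length]; omega)
  simp only [neg_eq_zero] at hfi
  have hfi1' : wt step w s (z.take (i + 1)) = -1 := by omega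
  have hsplit : z.take i ++ z[i]'hb :: z.drop (i + 1) = z := by
    rw [← List.drop_eq_getElem_cons hb, List.take_append_drop]
  have hts := wt_take_succ step w s z hb
  rw [hfi1', hfi] at hts
  have hwb : w (run step s (z.take i)) (z[i]'hb) = -1 := by omega
  have hvwt : wt step w
      (step (run step s (z.take i)) (z[i]'hb)) (z.drop (i + 1)) ≤ 0 := by
    have h2 := h
    rw [← hsplit, wt_append, wt_cons, hfi, hwb] at h2
    omega
  have d1 := derE' step w hw (NT.Zlt s) (z.take i) s hfi
  have d2 := derLE step w hw (NT.Zlt s) (z.drop (i+1)).length (z.drop (i + 1))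
    (step (run step s (z.take i)) (z[i]'hb)) le_rfl hvwt
  refine (produces_rule step w _ (memZlt step w s hwb)).trans_derives ?_
  have dall := derives_concat (derives_concat d1
    (ContextFreeGrammar.Derives.refl (g := G step w (NT.Zlt s)) [Symbol.terminal (z[i]'hb)])) d2
  have eqR : ((z.take i).map Symbol.terminal) ++ [Symbol.terminal (z[i]'hb)] ++
      ((z.drop (i + 1)).map Symbol.terminal) =
      z.map (Symbol.terminal : T → Symbol T (NT S)) := by
    conv_rhs => rw [← hsplit]
    simp only [List.map_cons, List.map_append, List.cons_append,
      List.singleton_append, List.append_assoc, List.nil_append]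
  rw [eqR] at dall
  exact dall

include hw in
lemma derZne (z : List T) (s : S) (h : wt step w s z ≠ 0) :
    (G step w (.Zne s)).Derives [Symbol.nonterminal (.Zne s)] (z.map Symbol.terminal) := by
  rcases lt_or_gt_of_ne h with hlt | hgt
  · have h : wt step w s z ≤ -1 := by omega
    obtain ⟨i, hb, hfi, hfi1⟩ :=
      first_hit (fun i => - wt step w s (z.take i))
        (fun i => by have := wt_take_bound step w hw s z i; omega)
        (by simp) (n := z.length)
        (by rw [List.take_length]; omega)
    simp only [neg_eq_zero] at hfi
    have hfi1' : wt step w s (z.take (i + 1)) = -1 := by omega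
    have hsplit : z.take i ++ z[i]'hb :: z.drop (i + 1) = z := by
      rw [← List.drop_eq_getElem_cons hb, List.take_append_drop]
    have hts := wt_take_succ step w s z hb
    rw [hfi1', hfi] at hts
    have hwb : w (run step s (z.take i)) (z[i]'hb) = -1 := by omega
    have hvwt : wt step w
        (step (run step s (z.take i)) (z[i]'hb)) (z.drop (i + 1)) ≤ 0 := by
      have h2 := h
      rw [← hsplit, wt_append, wt_cons, hfi, hwb] at h2
      omega
    have d1 := derE' step w hw (NT.Zne s) (z.take i) s hfi
    have d2 := derLE step w hw (NT.Zne s) (z.drop (i+1)).length (z.drop (i + 1))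
      (step (run step s (z.take i)) (z[i]'hb)) le_rfl hvwt
    refine (produces_rule step w _ (memZne2 step w s hwb)).trans_derives ?_
    have dall := derives_concat (derives_concat d1
      (ContextFreeGrammar.Derives.refl (g := G step w (NT.Zne s)) [Symbol.terminal (z[i]'hb)])) d2
    have eqR : ((z.take i).map Symbol.terminal) ++ [Symbol.terminal (z[i]'hb)] ++
        ((z.drop (i + 1)).map Symbol.terminal) =
        z.map (Symbol.terminal : T → Symbol T (NT S)) := by
      conv_rhs => rw [← hsplit]
      simp only [List.map_cons, List.map_append, List.cons_append,
        List.singleton_append, List.append_assoc, List.nil_append]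
    rw [eqR] at dall
    exact dall
  · have h : 1 ≤ wt step w s z := by omega
    obtain ⟨i, hb, hfi, hfi1⟩ :=
      first_hit (fun i => wt step w s (z.take i))
        (fun i => by have := wt_take_bound step w hw s z i; omega)
        (by simp) (n := z.length)
        (by rw [List.take_length]; omega)
    have hsplit : z.take i ++ z[i]'hb :: z.drop (i + 1) = z := by
      rw [← List.drop_eq_getElem_cons hb, List.take_append_drop]
    have hts := wt_take_succ step w s z hb
    rw [hfi1, hfi] at hts
    have hwb : w (run step s (z.take i)) (z[i]'hb) = 1 := by omega
    have hvwt : 0 ≤ wt step w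
        (step (run step s (z.take i)) (z[i]'hb)) (z.drop (i + 1)) := by
      have h2 := h
      rw [← hsplit, wt_append, wt_cons, hfi, hwb] at h2
      omega
    have d1 := derE' step w hw (NT.Zne s) (z.take i) s hfi
    have d2 := derGE step w hw (NT.Zne s) (z.drop (i+1)).length (z.drop (i + 1))
      (step (run step s (z.take i)) (z[i]'hb)) le_rfl hvwt
    refine (produces_rule step w _ (memZne1 step w s hwb)).trans_derives ?_
    have dall := derives_concat (derives_concat d1
      (ContextFreeGrammar.Derives.refl (g := G step w (NT.Zne s)) [Symbol.terminal (z[i]'hb)])) d2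
    have eqR : ((z.take i).map Symbol.terminal) ++ [Symbol.terminal (z[i]'hb)] ++
        ((z.drop (i + 1)).map Symbol.terminal) =
        z.map (Symbol.terminal : T → Symbol T (NT S)) := by
      conv_rhs => rw [← hsplit]
      simp only [List.map_cons, List.map_append, List.cons_append,
        List.singleton_append, List.append_assoc, List.nil_append]
    rw [eqR] at dall
    exact dall

include hw in
theorem cf_eq (s : S) :
    Language.IsContextFree {z : List T | wt step w s z = 0} := by
  refine ⟨G step w (.Zeq s), le_antisymm ?_ ?_⟩
  · exact lang_le step w (.Zeq s)
  · intro z hz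
    exact (ContextFreeGrammar.mem_language_iff _ _).mpr (derZeq step w hw z s hz)

include hw in
theorem cf_ge0 (s : S) :
    Language.IsContextFree {z : List T | 0 ≤ wt step w s z} := by
  refine ⟨G step w (.GE s), le_antisymm ?_ ?_⟩
  · exact lang_le step w (.GE s)
  · intro z hz
    exact (ContextFreeGrammar.mem_language_iff _ _).mpr
      (derGE step w hw (.GE s) z.length z s le_rfl hz)

include hw in
theorem cf_le0 (s : S) :
    Language.IsContextFree {z : List T | wt step w s z ≤ 0} := by
  refine ⟨G step w (.LE s), le_antisymm ?_ ?_⟩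
  · exact lang_le step w (.LE s)
  · intro z hz
    exact (ContextFreeGrammar.mem_language_iff _ _).mpr
      (derLE step w hw (.LE s) z.length z s le_rfl hz)

include hw in
theorem cf_gt0 (s : S) :
    Language.IsContextFree {z : List T | 1 ≤ wt step w s z} := by
  refine ⟨G step w (.Zgt s), le_antisymm ?_ ?_⟩
  · exact lang_le step w (.Zgt s)
  · intro z hz
    exact (ContextFreeGrammar.mem_language_iff _ _).mpr (derZgt step w hw z s hz)

include hw in
theorem cf_lt0 (s : S) :
    Language.IsContextFree {z : List T | wt step w s z ≤ -1} := by
  refine ⟨G step w (.Zlt s), le_antisymm ?_ ?_⟩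
  · exact lang_le step w (.Zlt s)
  · intro z hz
    exact (ContextFreeGrammar.mem_language_iff _ _).mpr (derZlt step w hw z s hz)

include hw in
theorem cf_ne0 (s : S) :
    Language.IsContextFree {z : List T | wt step w s z ≠ 0} := by
  refine ⟨G step w (.Zne s), le_antisymm ?_ ?_⟩
  · exact lang_le step w (.Zne s)
  · intro z hz
    exact (ContextFreeGrammar.mem_language_iff _ _).mpr (derZne step w hw z s hz)

end Grammar
end CFCounter


namespace CFApp

variable {α : Type} [DecidableEq α]

/-- last `m` elements of a list -/
def wnd (m : ℕ) (l : List α) : List α := l.drop (l.length - m)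

lemma wnd_suffix (m : ℕ) (l : List α) : wnd m l <:+ l := List.drop_suffix _ _

lemma wnd_length (m : ℕ) (l : List α) : (wnd m l).length = min l.length m := by
  simp [wnd]; omega

lemma suffix_of_suffix_le {s t u : List α} (h1 : s <:+ u) (h2 : t <:+ u)
    (h : s.length ≤ t.length) : s <:+ t := by
  rw [← List.reverse_prefix] at h1 h2 ⊢
  exact List.prefix_of_prefix_length_le h1 h2 (by simpa using h)

lemma suffix_eq_of_length {s t u : List α} (h1 : s <:+ u) (h2 : t <:+ u)
    (h : s.length = t.length) : s = t :=
  (suffix_of_suffix_le h1 h2 h.le).eq_of_length h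

lemma suffix_append_right {s t : List α} (h : s <:+ t) (u : List α) :
    s ++ u <:+ t ++ u := by
  obtain ⟨p, rfl⟩ := h
  exact ⟨p, (List.append_assoc _ _ _).symm⟩

lemma wnd_append_suffix (m : ℕ) (l : List α) (a : α) :
    wnd m l ++ [a] <:+ l ++ [a] := suffix_append_right (wnd_suffix m l) [a]

lemma wnd_wnd_append (m : ℕ) (l : List α) (a : α) :
    wnd m (wnd m l ++ [a]) = wnd m (l ++ [a]) := by
  refine suffix_eq_of_length
    ((wnd_suffix m _).trans (wnd_append_suffix m l a))
    (wnd_suffix m _) ?_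
  rw [wnd_length, wnd_length]
  simp [wnd_length]
  omega

lemma suffix_wnd_iff {x : List α} (m : ℕ) (hx : x.length ≤ m + 1) (z : List α) (a : α) :
    x <:+ wnd m z ++ [a] ↔ x <:+ z ++ [a] := by
  constructor
  · intro h; exact h.trans (wnd_append_suffix m z a)
  · intro h
    refine suffix_of_suffix_le h (wnd_append_suffix m z a) ?_
    have := h.length_le
    simp only [List.length_append, List.length_singleton, wnd_length] at *
    omega

lemma occCount_eq_countP (x z : List α) :
    occCount x z = (List.range (z.length + 1)).countP (fun i => decide (x <+: z.drop i)) := by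
  rw [occCount, List.countP_eq_length_filter]

lemma occCount_nil {x : List α} (hx : x ≠ []) : occCount x [] = 0 := by
  simp [occCount, List.prefix_nil, hx]

lemma countP_disj_or (p q : ℕ → Prop) [DecidablePred p] [DecidablePred q] (l : List ℕ)
    (hdisj : ∀ i ∈ l, ¬(p i ∧ q i)) :
    l.countP (fun i => decide (p i) || decide (q i)) =
      l.countP (fun i => decide (p i)) + l.countP (fun i => decide (q i)) := by
  induction l with
  | nil => simp
  | cons a l ih =>
    have hd : ¬(p a ∧ q a) := hdisj a (List.mem_cons_self (a := a) (l := l))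
    have ih' := ih (fun i hi => hdisj i (List.mem_cons_of_mem a hi))
    rw [List.countP_cons, List.countP_cons, List.countP_cons, ih']
    by_cases hp : p a <;> by_cases hq : q a <;> simp [hp, hq] at hd ⊢ <;> omega

lemma occCount_append {x : List α} (hx : x ≠ []) (z : List α) (a : α) :
    occCount x (z ++ [a]) = occCount x z + (if x <:+ z ++ [a] then 1 else 0) := by
  have hxpos : 1 ≤ x.length := List.length_pos_iff.mpr hx
  rw [occCount_eq_countP]
  have hlen : (z ++ [a]).length + 1 = z.length + 1 + 1 := by simp
  rw [hlen, List.range_succ, List.countP_append]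
  have hlast : List.countP (fun i => decide (x <+: (z ++ [a]).drop i)) [z.length + 1] = 0 := by
    have : (z ++ [a]).drop (z.length + 1) = [] := by
      apply List.drop_eq_nil_of_le; simp
    simp [this, List.prefix_nil, hx]
  rw [hlast, Nat.add_zero]
  have hcong : List.countP (fun i => decide (x <+: (z ++ [a]).drop i))
      (List.range (z.length + 1)) =
      List.countP (fun i => decide (x <+: z.drop i) || decide (x = z.drop i ++ [a]))
      (List.range (z.length + 1)) := by
    apply List.countP_congr
    intro i hi
    rw [List.mem_range] at hi
    have hle : i ≤ z.length := by omega
    have hdrop : (z ++ [a]).drop i = z.drop i ++ [a] := List.drop_append_of_le_length hle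
    rw [hdrop, Bool.eq_iff_iff]
    simp only [decide_eq_true_eq, Bool.or_eq_true]
    rw [List.prefix_concat_iff]
    tauto
  rw [hcong, countP_disj_or]
  · congr 1
    · rw [occCount_eq_countP]
    · by_cases hsuf : x <:+ z ++ [a]
      · have hxlen : x.length ≤ z.length + 1 := by
          have := hsuf.length_le; simpa using this
        have heq : ∀ i ∈ List.range (z.length + 1),
            (x = z.drop i ++ [a]) ↔ i = z.length + 1 - x.length := by
          intro i hi
          rw [List.mem_range] at hi
          constructor
          · intro h
            have := congrArg List.length h
            simp only [List.length_append, List.length_singleton, List.length_drop] at this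
            omega
          · rintro rfl
            have hi0 : z.length + 1 - x.length ≤ z.length := by omega
            have hx2 : x = (z ++ [a]).drop (z.length + 1 - x.length) := by
              have h3 := List.suffix_iff_eq_drop.mp hsuf
              simpa using h3
            conv_lhs => rw [hx2]
            exact List.drop_append_of_le_length hi0
        rw [if_pos hsuf]
        rw [List.countP_congr (p := fun i => decide (x = z.drop i ++ [a]))
          (q := fun i => i == z.length + 1 - x.length) ?_]
        · rw [← List.count]
          exact List.count_eq_one_of_mem List.nodup_range
            (List.mem_range.mpr (by omega))
        · intro i hi
          rw [Bool.eq_iff_iff]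
          simp [heq i hi]
      · rw [if_neg hsuf]
        apply List.countP_eq_zero.mpr
        intro i hi
        rw [List.mem_range] at hi
        simp only [decide_eq_true_eq]
        intro h
        apply hsuf
        rw [h, ← List.drop_append_of_le_length (by omega : i ≤ z.length)]
        exact List.drop_suffix _ _
  · intro i hi
    rw [List.mem_range] at hi
    rintro ⟨h1, h2⟩
    have hl1 := h1.length_le
    have := congrArg List.length h2
    simp only [List.length_append, List.length_singleton, List.length_drop] at *
    omega

end CFApp

instance fintypeListLe {α : Type} [DecidableEq α] [Fintype α] (m : ℕ) :
    Fintype {l : List α // l.length ≤ m} :=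
  Fintype.ofSurjective
    (fun p : (Σ i : Fin (m + 1), List.Vector α i) =>
      (⟨p.2.1, by
        obtain ⟨i, v⟩ := p
        have hv := v.2
        have hi := i.2
        simp only [hv]
        omega⟩ : {l : List α // l.length ≤ m}))
    (fun l => ⟨⟨⟨l.1.length, Nat.lt_succ_of_le l.2⟩, ⟨l.1, rfl⟩⟩, Subtype.ext rfl⟩)

theorem stmt_0 {α : Type} [Fintype α] [DecidableEq α] (x y : List α)
    (hx : x ≠ []) (hy : y ≠ []) :
    Language.IsContextFree ({z : List α | occCount x z < occCount y z} : Language α) ∧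
    Language.IsContextFree ({z : List α | occCount x z ≤ occCount y z} : Language α) ∧
    Language.IsContextFree ({z : List α | occCount x z = occCount y z} : Language α) ∧
    Language.IsContextFree ({z : List α | occCount x z ≥ occCount y z} : Language α) ∧
    Language.IsContextFree ({z : List α | occCount x z > occCount y z} : Language α) ∧
    Language.IsContextFree ({z : List α | occCount x z ≠ occCount y z} : Language α) := by
  classical
  set m := max x.length y.length with hm
  have hxm : x.length ≤ m + 1 := by omega
  have hym : y.length ≤ m + 1 := by omega
  let step₀ : {l : List α // l.length ≤ m} → α → {l : List α // l.length ≤ m} :=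
    fun s a => ⟨CFApp.wnd m (s.1 ++ [a]), by rw [CFApp.wnd_length]; omega⟩
  let w₀ : {l : List α // l.length ≤ m} → α → ℤ := fun s a =>
    (if y <:+ s.1 ++ [a] then 1 else 0) - (if x <:+ s.1 ++ [a] then 1 else 0)
  have hw : ∀ s a, w₀ s a = 1 ∨ w₀ s a = 0 ∨ w₀ s a = -1 := by
    intro s a
    by_cases h1 : y <:+ s.1 ++ [a] <;> by_cases h2 : x <:+ s.1 ++ [a] <;>
      simp [w₀, h1, h2]
  let s₀ : {l : List α // l.length ≤ m} := ⟨[], by simp⟩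
  have corr : ∀ z : List α, (CFCounter.run step₀ s₀ z).1 = CFApp.wnd m z ∧
      CFCounter.wt step₀ w₀ s₀ z = (occCount y z : ℤ) - (occCount x z : ℤ) := by
    intro z
    induction z using List.reverseRecOn with
    | nil =>
      refine ⟨?_, ?_⟩
      · simp [CFApp.wnd, s₀]
      · simp [CFApp.occCount_nil hx, CFApp.occCount_nil hy]
    | append_singleton z a ih =>
      obtain ⟨ih1, ih2⟩ := ih
      have hrun : CFCounter.run step₀ s₀ (z ++ [a]) = step₀ (CFCounter.run step₀ s₀ z) a := by
        rw [CFCounter.run_append]; rfl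
      have hwz : w₀ (CFCounter.run step₀ s₀ z) a =
          (if y <:+ z ++ [a] then (1 : ℤ) else 0) -
            (if x <:+ z ++ [a] then (1 : ℤ) else 0) := by
        show (if y <:+ (CFCounter.run step₀ s₀ z).1 ++ [a] then (1 : ℤ) else 0) -
            (if x <:+ (CFCounter.run step₀ s₀ z).1 ++ [a] then (1 : ℤ) else 0) = _
        rw [ih1]
        rw [if_congr (CFApp.suffix_wnd_iff m hym z a) rfl rfl,
          if_congr (CFApp.suffix_wnd_iff m hxm z a) rfl rfl]
      refine ⟨?_, ?_⟩
      · rw [hrun]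
        show CFApp.wnd m ((CFCounter.run step₀ s₀ z).1 ++ [a]) = _
        rw [ih1, CFApp.wnd_wnd_append]
      · rw [CFCounter.wt_append]
        have hone : CFCounter.wt step₀ w₀ (CFCounter.run step₀ s₀ z) [a] =
            w₀ (CFCounter.run step₀ s₀ z) a := by
          rw [CFCounter.wt_cons, CFCounter.wt_nil, add_zero]
        rw [hone, ih2, hwz, CFApp.occCount_append hy z a, CFApp.occCount_append hx z a]
        split_ifs <;> push_cast <;> ring
  have hlt : ({z : List α | occCount x z < occCount y z} : Language α) =
      {z : List α | 1 ≤ CFCounter.wt step₀ w₀ s₀ z} := by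
    ext z
    simp only [Set.mem_setOf_eq, (corr z).2]
    omega
  have hle : ({z : List α | occCount x z ≤ occCount y z} : Language α) =
      {z : List α | 0 ≤ CFCounter.wt step₀ w₀ s₀ z} := by
    ext z
    simp only [Set.mem_setOf_eq, (corr z).2]
    omega
  have heq : ({z : List α | occCount x z = occCount y z} : Language α) =
      {z : List α | CFCounter.wt step₀ w₀ s₀ z = 0} := by
    ext z
    simp only [Set.mem_setOf_eq, (corr z).2]
    omega
  have hge : ({z : List α | occCount x z ≥ occCount y z} : Language α) =
      {z : List α | CFCounter.wt step₀ w₀ s₀ z ≤ 0} := by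
    ext z
    simp only [Set.mem_setOf_eq, ge_iff_le, (corr z).2]
    omega
  have hgt : ({z : List α | occCount x z > occCount y z} : Language α) =
      {z : List α | CFCounter.wt step₀ w₀ s₀ z ≤ -1} := by
    ext z
    simp only [Set.mem_setOf_eq, gt_iff_lt, (corr z).2]
    omega
  have hne : ({z : List α | occCount x z ≠ occCount y z} : Language α) =
      {z : List α | CFCounter.wt step₀ w₀ s₀ z ≠ 0} := by
    ext z
    simp only [Set.mem_setOf_eq, ne_eq, (corr z).2]
    omega
  refine ⟨?_, ?_, ?_, ?_, ?_, ?_⟩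
  · rw [hlt]; exact CFCounter.cf_gt0 step₀ w₀ hw s₀
  · rw [hle]; exact CFCounter.cf_ge0 step₀ w₀ hw s₀
  · rw [heq]; exact CFCounter.cf_eq step₀ w₀ hw s₀
  · rw [hge]; exact CFCounter.cf_le0 step₀ w₀ hw s₀
  · rw [hgt]; exact CFCounter.cf_lt0 step₀ w₀ hw s₀
  · rw [hne]; exact CFCounter.cf_ne0 step₀ w₀ hw s₀
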